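/- No Type I molecular breathers exist on the breathing kagome unit cell: there is no real normalized solution (a,b,c) with a,b,c pairwise distinct and all nonzero of the system ω a = g a³ - m b - m c, ω b = -m a + g b³ - m c, ω c = -m a - m b + g c³ with a² + b² + c² = 1. -/
import Mathlib

/-- No Type I molecular breathers on the breathing kagome unit cell: there is
    no normalized real solution (a,b,c) with pairwise distinct, nonzero
    components. -/
theorem stmt_9 (m g ω a b c : ℝ) (hg : g ≠ 0)
    (hnorm : a ^ 2 + b ^ 2 + c ^ 2 = 1)
    (h1 : ω * a = g * a ^ 3 - m * b - m * c)
    (h2 : ω * b = -m * a + g * b ^ 3 - m * c)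
    (h3 : ω * c = -m * a - m * b + g * c ^ 3)
    (hab : a ≠ b) (hbc : b ≠ c) (hac : a ≠ c)
    (ha : a ≠ 0) (hb : b ≠ 0) (hc : c ≠ 0) : False := by
  have k12 : (a - b) * (ω - m - g * (a^2 + a*b + b^2)) = 0 := by
    linear_combination h1 - h2
  have k13 : (a - c) * (ω - m - g * (a^2 + a*c + c^2)) = 0 := by
    linear_combination h1 - h3
  have e12 : ω - m - g * (a^2 + a*b + b^2) = 0 :=
    (mul_eq_zero.1 k12).resolve_left (sub_ne_zero.2 hab)
  have e13 : ω - m - g * (a^2 + a*c + c^2) = 0 :=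
    (mul_eq_zero.1 k13).resolve_left (sub_ne_zero.2 hac)
  have hsum : a + b + c = 0 := by
    have : g * ((b - c) * (a + b + c)) = 0 := by linear_combination e13 - e12
    have := (mul_eq_zero.1 this).resolve_left hg
    exact (mul_eq_zero.1 this).resolve_left (sub_ne_zero.2 hbc)
  have habc : g * (3 * (a * b * c)) = 0 := by
    linear_combination -h1 - h2 - h3 + (ω + 2*m - g*(a^2 + b^2 + c^2 - a*b - b*c - a*c)) * hsum
  exact hc (by have := (mul_eq_zero.1 ((mul_eq_zero.1 habc).resolve_left hg)).resolve_left three_ne_zero; exact (mul_eq_zero.1 this).resolve_left (mul_ne_zero ha hb))
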